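/- The ideal tilted CHSH strategy achieves the quantum bound: for β ∈ [0,2), let θ ∈ (0, π/4] with sin 2θ = √((4−β²)/(4+β²)), μ = arctan(sin 2θ), α = tan θ, |Ψ⟩ = cos θ(|00⟩ + α|11⟩), A₀ = σ^z, A₁ = σ^x, B₀ = cos μ σ^z + sin μ σ^x, B₁ = cos μ σ^z − sin μ σ^x. Then ⟨Ψ| βA₀⊗I + A₀⊗B₀ + A₀⊗B₁ + A₁⊗B₀ − A₁⊗B₁ |Ψ⟩ = √(8 + 2β²). -/

import Mathlib

open Kronecker Matrix

noncomputable section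

/-- The Pauli `σᶻ` matrix. -/
def sigmaZ : Matrix (Fin 2) (Fin 2) ℂ := !![1, 0; 0, -1]

/-- The Pauli `σˣ` matrix. -/
def sigmaX : Matrix (Fin 2) (Fin 2) ℂ := !![0, 1; 1, 0]

/-- The tilted Pauli observable `σᶻ_α = cos μ σᶻ + sin μ σˣ`. -/
def tiltedZ (μ : ℝ) : Matrix (Fin 2) (Fin 2) ℂ :=
  (Real.cos μ : ℂ) • sigmaZ + (Real.sin μ : ℂ) • sigmaX

/-- The tilted Pauli observable `σˣ_α = cos μ σᶻ − sin μ σˣ`. -/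
def tiltedX (μ : ℝ) : Matrix (Fin 2) (Fin 2) ℂ :=
  (Real.cos μ : ℂ) • sigmaZ - (Real.sin μ : ℂ) • sigmaX

/-- The tilted EPR pair `cos θ (|00⟩ + α |11⟩)`. -/
def tiltedEPR (θ α : ℝ) : Fin 2 × Fin 2 → ℂ := fun p =>
  if p = (0, 0) then (Real.cos θ : ℂ)
  else if p = (1, 1) then (Real.cos θ : ℂ) * (α : ℂ) else 0

private theorem key (β θ μ α : ℝ)
    (hβ0 : 0 ≤ β) (hβ2 : β < 2) (hθ0 : 0 < θ) (hθ1 : θ ≤ Real.pi / 4)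
    (hsin : Real.sin (2 * θ) = Real.sqrt ((4 - β ^ 2) / (4 + β ^ 2)))
    (hμ : μ = Real.arctan (Real.sin (2 * θ)))
    (hα : α = Real.tan θ) :
    Real.cos θ ^ 2 * β - Real.cos θ ^ 2 * β * α ^ 2 +
          Real.cos θ ^ 2 * Real.cos μ * 2 +
        Real.cos θ ^ 2 * Real.cos μ * α ^ 2 * 2 +
      Real.cos θ ^ 2 * Real.sin μ * α * 4 = Real.sqrt (8 + 2 * β ^ 2) := by
  have hβ4 : (0:ℝ) < 4 + β ^ 2 := by positivity
  have hβ4' : (0:ℝ) ≤ 4 - β ^ 2 := by nlinarith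
  have hc : Real.cos θ ≠ 0 := by
    have := Real.cos_pos_of_mem_Ioo ⟨by linarith [Real.pi_pos], by
      linarith [Real.pi_pos]⟩ (x := θ)
    exact ne_of_gt this
  -- reduce to trig form
  have step1 : Real.cos θ ^ 2 * β - Real.cos θ ^ 2 * β * α ^ 2 +
          Real.cos θ ^ 2 * Real.cos μ * 2 +
        Real.cos θ ^ 2 * Real.cos μ * α ^ 2 * 2 +
      Real.cos θ ^ 2 * Real.sin μ * α * 4
      = β * Real.cos (2*θ) + 2 * Real.cos μ + 2 * Real.sin μ * Real.sin (2*θ) := by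
    rw [hα, Real.tan_eq_sin_div_cos, Real.sin_two_mul, Real.cos_two_mul']
    have h1 := Real.sin_sq_add_cos_sq θ
    field_simp
    linear_combination (2 * Real.cos μ) * h1
  rw [step1]
  set s := Real.sin (2*θ) with hsdef
  have hs2 : s ^ 2 = (4 - β ^ 2) / (4 + β ^ 2) := by
    rw [hsin]; exact Real.sq_sqrt (by positivity)
  have h1s : 1 + s ^ 2 = 8 / (4 + β ^ 2) := by
    rw [hs2]; field_simp; ring
  set D := Real.sqrt (4 + β ^ 2) with hDdef
  have hD : D ^ 2 = 4 + β ^ 2 := Real.sq_sqrt (le_of_lt hβ4)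
  have hDpos : 0 < D := Real.sqrt_pos.2 hβ4
  have h8 : Real.sqrt 8 = 2 * Real.sqrt 2 := by
    rw [show (8:ℝ) = 2^2 * 2 by norm_num, Real.sqrt_mul (by positivity), Real.sqrt_sq (by norm_num)]
  have hsq1s : Real.sqrt (1 + s ^ 2) = 2 * Real.sqrt 2 / D := by
    rw [h1s, Real.sqrt_div (by norm_num : (0:ℝ) ≤ 8), h8]
  have hs2' : s ^ 2 * (4 + β ^ 2) = 4 - β ^ 2 := by
    rw [hs2]; field_simp
  have hcos2 : Real.cos (2*θ) = β * Real.sqrt 2 / D := by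
    have hnn : 0 ≤ Real.cos (2*θ) :=
      Real.cos_nonneg_of_mem_Icc ⟨by linarith [Real.pi_pos], by linarith⟩
    have hpyth := Real.sin_sq_add_cos_sq (2*θ)
    rw [← hsdef] at hpyth
    have hnn2 : 0 ≤ β * Real.sqrt 2 / D := by positivity
    have hsq : Real.cos (2*θ) ^ 2 = (β * Real.sqrt 2 / D) ^ 2 := by
      rw [div_pow, mul_pow, Real.sq_sqrt (by norm_num : (0:ℝ) ≤ 2), hD,
        eq_div_iff (ne_of_gt hβ4)]
      linear_combination (4 + β ^ 2) * hpyth - hs2'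
    calc Real.cos (2*θ) = Real.sqrt (Real.cos (2*θ) ^ 2) := (Real.sqrt_sq hnn).symm
      _ = Real.sqrt ((β * Real.sqrt 2 / D) ^ 2) := by rw [hsq]
      _ = β * Real.sqrt 2 / D := Real.sqrt_sq hnn2
  set X := Real.sqrt (1 + s ^ 2) with hXdef
  have hXpos : 0 < X := Real.sqrt_pos.2 (by positivity)
  have hX2 : X ^ 2 = 1 + s ^ 2 := Real.sq_sqrt (by positivity)
  rw [hcos2, hμ, Real.cos_arctan, Real.sin_arctan, ← hXdef]
  have hmid : 2 * (1 / X) + 2 * (s / X) * s = 2 * X := by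
    field_simp
    linear_combination (-1) * hX2
  have hRHS : Real.sqrt (8 + 2 * β ^ 2) = Real.sqrt 2 * D := by
    rw [show (8:ℝ) + 2 * β ^ 2 = 2 * (4 + β ^ 2) by ring,
      Real.sqrt_mul (by norm_num : (0:ℝ) ≤ 2)]
  have h2 : Real.sqrt 2 ^ 2 = 2 := Real.sq_sqrt (by norm_num)
  rw [hRHS, show β * (β * Real.sqrt 2 / D) + 2 * (1 / X) + 2 * (s / X) * s
      = β * (β * Real.sqrt 2 / D) + (2 * (1 / X) + 2 * (s / X) * s) by ring,
    hmid, hsq1s]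
  field_simp
  linear_combination (-1) * hD

/-- The ideal tilted CHSH strategy achieves the quantum bound
`√(8 + 2β²)`: with `sin 2θ = √((4−β²)/(4+β²))`, `μ = arctan (sin 2θ)`, `α = tan θ`,
the state `|Ψ⟩ = cos θ (|00⟩ + α|11⟩)` and observables `A₀ = σᶻ`, `A₁ = σˣ`,
`B₀ = cos μ σᶻ + sin μ σˣ`, `B₁ = cos μ σᶻ − sin μ σˣ` achieve equality in the
tilted CHSH inequality. -/
theorem tilted_chsh_ideal_strategy (β θ μ α : ℝ)
    (hβ0 : 0 ≤ β) (hβ2 : β < 2) (hθ0 : 0 < θ) (hθ1 : θ ≤ Real.pi / 4)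
    (hsin : Real.sin (2 * θ) = Real.sqrt ((4 - β ^ 2) / (4 + β ^ 2)))
    (hμ : μ = Real.arctan (Real.sin (2 * θ)))
    (hα : α = Real.tan θ) :
    (star (tiltedEPR θ α) ⬝ᵥ
      (((β : ℂ) • (sigmaZ ⊗ₖ (1 : Matrix (Fin 2) (Fin 2) ℂ))
          + sigmaZ ⊗ₖ tiltedZ μ + sigmaZ ⊗ₖ tiltedX μ
          + sigmaX ⊗ₖ tiltedZ μ - sigmaX ⊗ₖ tiltedX μ) *ᵥ tiltedEPR θ α)).re
      = Real.sqrt (8 + 2 * β ^ 2) := by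
  simp only [tiltedEPR, tiltedZ, tiltedX, sigmaZ, sigmaX, dotProduct, mulVec,
    Fintype.sum_prod_type, Fin.sum_univ_two, kroneckerMap_apply, Matrix.add_apply,
    Matrix.sub_apply, Matrix.smul_apply, Matrix.one_apply, Pi.star_apply,
    Matrix.cons_val', Matrix.cons_val_zero, Matrix.cons_val_one, Matrix.head_cons,
    Matrix.head_fin_const, Matrix.empty_val', Matrix.cons_val_fin_one, smul_eq_mul]
  norm_num [Prod.ext_iff]
  ring_nf
  simp only [Complex.cos_ofReal_re, Complex.sin_ofReal_re]
  rw [show (8:ℝ) + β ^ 2 * 2 = 8 + 2 * β ^ 2 by ring]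
  exact key β θ μ α hβ0 hβ2 hθ0 hθ1 hsin hμ hα

end
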